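/- Let Ω ⊂ ℝ^N be a bounded open set, let U ⊂ ℝ^N be an open set containing the closure of Ω, and let u ∈ C¹(U) be such that ∇u(x) ≠ 0 for every x in the closure of Ω with u(x) = 0. Then there exists a constant κ > 0 such that λ({x ∈ Ω : |u(x)| ≤ δ}) ≤ κδ for every δ > 0. -/

import Mathlib

open MeasureTheory Set Metric

lemma slab_vol {N : ℕ} (e : EuclideanSpace ℝ (Fin N)) (he : ‖e‖ = 1)
    (z : EuclideanSpace ℝ (Fin N)) (R c δ : ℝ) :
    volume {y | y ∈ ball z R ∧ |(inner ℝ e y : ℝ) - c| ≤ δ} ≤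
      ENNReal.ofReal (2 * δ) * ENNReal.ofReal (2 * R) ^ (N - 1) := by
  have hN : N ≠ 0 := by
    rintro rfl
    have : e = 0 := Subsingleton.elim e 0
    rw [this, norm_zero] at he; norm_num at he
  haveI : NeZero N := ⟨hN⟩
  have hcard : Module.finrank ℝ (EuclideanSpace ℝ (Fin N)) = Fintype.card (Fin N) := by
    simp [finrank_euclideanSpace]
  have hον : Orthonormal ℝ (({(0 : Fin N)} : Set (Fin N)).restrict (fun _ => e)) := by
    constructor
    · intro i; exact he
    · intro i j hij
      have hi := i.2; have hj := j.2
      simp only [Set.mem_singleton_iff] at hi hj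
      exact absurd (Subtype.ext (hi.trans hj.symm)) hij
  obtain ⟨b, hb⟩ := hον.exists_orthonormalBasis_extension_of_card_eq hcard
  have hb0 : b 0 = e := hb 0 rfl
  set I : Fin N → Set ℝ := fun i => if i = 0 then Icc (c - δ) (c + δ)
      else Icc (b.repr z i - R) (b.repr z i + R) with hI
  have hset : (⇑b.repr ⁻¹' ((MeasurableEquiv.toLp 2 (Fin N → ℝ)).symm ⁻¹' (Set.univ.pi I)))
      ⊇ {y | y ∈ ball z R ∧ |(inner ℝ e y : ℝ) - c| ≤ δ} := by
    rintro y ⟨hy1, hy2⟩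
    intro i _
    show b.repr y i ∈ I i
    by_cases h0 : i = 0
    · subst h0
      have hre : b.repr y 0 = (inner ℝ e y : ℝ) := by rw [b.repr_apply_apply, hb0]
      simp only [hI, if_pos rfl, mem_Icc, hre]
      constructor <;> [linarith [(abs_le.1 hy2).1]; linarith [(abs_le.1 hy2).2]]
    · have hdist : dist (b.repr y) (b.repr z) < R := by
        rw [b.repr.dist_map]; exact hy1
      have h1 : dist (b.repr y i) (b.repr z i) ≤ dist (b.repr y) (b.repr z) := by
        rw [EuclideanSpace.dist_eq]
        rw [show dist (b.repr y i) (b.repr z i)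
            = Real.sqrt (dist (b.repr y i) (b.repr z i) ^ 2) from (Real.sqrt_sq dist_nonneg).symm]
        exact Real.sqrt_le_sqrt
          (Finset.single_le_sum (f := fun j => dist (b.repr y j) (b.repr z j) ^ 2)
            (fun j _ => sq_nonneg _) (Finset.mem_univ i))
      rw [Real.dist_eq] at h1
      simp only [hI, if_neg h0, mem_Icc]
      constructor <;> [linarith [(abs_le.1 (h1.trans hdist.le)).1];
        linarith [(abs_le.1 (h1.trans hdist.le)).2]]
  have hboxmeas : MeasurableSet (Set.univ.pi I) := MeasurableSet.univ_pi fun i => by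
    by_cases h : i = 0
    · simp only [hI, if_pos h]; exact measurableSet_Icc
    · simp only [hI, if_neg h]; exact measurableSet_Icc
  calc volume {y | y ∈ ball z R ∧ |(inner ℝ e y : ℝ) - c| ≤ δ}
      ≤ volume (⇑b.repr ⁻¹' ((MeasurableEquiv.toLp 2 (Fin N → ℝ)).symm ⁻¹' (Set.univ.pi I))) :=
        measure_mono hset
    _ = volume ((MeasurableEquiv.toLp 2 (Fin N → ℝ)).symm ⁻¹' (Set.univ.pi I)) :=
        b.measurePreserving_repr.measure_preimage
          (((MeasurableEquiv.toLp 2 (Fin N → ℝ)).symm.measurable hboxmeas).nullMeasurableSet)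
    _ = volume (Set.univ.pi I) :=
        (EuclideanSpace.volume_preserving_symm_measurableEquiv_toLp (Fin N)).measure_preimage
          hboxmeas.nullMeasurableSet
    _ ≤ ENNReal.ofReal (2 * δ) * ENNReal.ofReal (2 * R) ^ (N - 1) := by
        rw [volume_pi_pi]
        have hvol : ∀ i : Fin N,
            volume (I i) = if i = 0 then ENNReal.ofReal (2 * δ) else ENNReal.ofReal (2 * R) := by
          intro i
          by_cases h : i = 0
          · simp only [hI, if_pos h, Real.volume_Icc]; congr 1; ring
          · simp only [hI, if_neg h, Real.volume_Icc]; congr 1; ring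
        rw [Finset.prod_congr rfl (fun i _ => hvol i)]
        rw [← Finset.mul_prod_erase Finset.univ _ (Finset.mem_univ (0 : Fin N))]
        rw [if_pos rfl]
        have : ∀ i ∈ Finset.univ.erase (0 : Fin N),
            (if i = 0 then ENNReal.ofReal (2 * δ) else ENNReal.ofReal (2 * R))
              = ENNReal.ofReal (2 * R) := by
          intro i hi; rw [if_neg (Finset.ne_of_mem_erase hi)]
        rw [Finset.prod_congr rfl this, Finset.prod_const,
          Finset.card_erase_of_mem (Finset.mem_univ _), Finset.card_univ, Fintype.card_fin]

lemma local_bound {N : ℕ} {U : Set (EuclideanSpace ℝ (Fin N))} (hUo : IsOpen U)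
    {u : EuclideanSpace ℝ (Fin N) → ℝ} (hu : ContDiffOn ℝ 1 u U)
    {z : EuclideanSpace ℝ (Fin N)} (hzU : z ∈ U) (hg : gradient u z ≠ 0) :
    ∃ r > 0, ∃ C : ℝ, 0 ≤ C ∧ ∀ δ : ℝ, 0 < δ →
      volume {x | x ∈ ball z r ∧ |u x| ≤ δ} ≤ ENNReal.ofReal (C * δ) := by
  classical
  set g : (EuclideanSpace ℝ (Fin N)) := gradient u z with hgdef
  have hng : 0 < ‖g‖ := norm_pos_iff.2 hg
  set e : (EuclideanSpace ℝ (Fin N)) := ‖g‖⁻¹ • g with hedef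
  have he : ‖e‖ = 1 := by
    rw [hedef, norm_smul, norm_inv, norm_norm]
    field_simp
  set Φ : (EuclideanSpace ℝ (Fin N)) → (EuclideanSpace ℝ (Fin N)) := fun x => x + (‖g‖⁻¹ * u x - (inner ℝ e x : ℝ)) • e with hΦdef
  have hinnerΦ : ∀ x, (inner ℝ e (Φ x) : ℝ) = ‖g‖⁻¹ * u x := by
    intro x
    simp only [hΦdef, inner_add_right, real_inner_smul_right, real_inner_self_eq_norm_mul_norm,
      he]
    ring
  -- derivative facts
  have hua : ContDiffAt ℝ 1 u z := hu.contDiffAt (hUo.mem_nhds hzU)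
  have hsd : HasStrictFDerivAt u (fderiv ℝ u z) z := hua.hasStrictFDerivAt one_ne_zero
  have hgrad : ∀ v : (EuclideanSpace ℝ (Fin N)), (inner ℝ g v : ℝ) = fderiv ℝ u z v := by
    intro v
    rw [hgdef]
    exact InnerProductSpace.toDual_symm_apply
  -- scalar part has derivative 0 at z
  have hs1 : HasStrictFDerivAt (fun x : (EuclideanSpace ℝ (Fin N)) => ‖g‖⁻¹ * u x - (inner ℝ e x : ℝ))
      ((‖g‖⁻¹ • fderiv ℝ u z) - (innerSL ℝ e : (EuclideanSpace ℝ (Fin N)) →L[ℝ] ℝ)) z := by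
    exact (hsd.const_smul ‖g‖⁻¹).sub ((innerSL ℝ e).hasStrictFDerivAt)
  have hD0 : (‖g‖⁻¹ • fderiv ℝ u z) - (innerSL ℝ e : (EuclideanSpace ℝ (Fin N)) →L[ℝ] ℝ) = 0 := by
    ext v
    simp only [ContinuousLinearMap.coe_sub', Pi.sub_apply, ContinuousLinearMap.coe_smul',
      Pi.smul_apply, innerSL_apply_apply, ContinuousLinearMap.zero_apply, smul_eq_mul]
    rw [← hgrad v, hedef, real_inner_smul_left]
    ring
  rw [hD0] at hs1
  have hΦsd : HasStrictFDerivAt Φ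
      ((ContinuousLinearEquiv.refl ℝ (EuclideanSpace ℝ (Fin N)) : (EuclideanSpace ℝ (Fin N)) ≃L[ℝ] (EuclideanSpace ℝ (Fin N))) : (EuclideanSpace ℝ (Fin N)) →L[ℝ] (EuclideanSpace ℝ (Fin N))) z := by
    have h2 := (hasStrictFDerivAt_id z).add (hs1.smul_const e)
    have : (ContinuousLinearMap.id ℝ (EuclideanSpace ℝ (Fin N))) + ((0 : (EuclideanSpace ℝ (Fin N)) →L[ℝ] ℝ).smulRight e)
        = ((ContinuousLinearEquiv.refl ℝ (EuclideanSpace ℝ (Fin N)) : (EuclideanSpace ℝ (Fin N)) ≃L[ℝ] (EuclideanSpace ℝ (Fin N))) : (EuclideanSpace ℝ (Fin N)) →L[ℝ] (EuclideanSpace ℝ (Fin N))) := by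
      ext v; simp
    rwa [this] at h2
  set PH := hΦsd.toOpenPartialHomeomorph Φ with hPH
  have hzsource : z ∈ PH.source := hΦsd.mem_toOpenPartialHomeomorph_source
  have hinj : InjOn Φ PH.source := by
    have := PH.injOn
    rwa [hPH, hΦsd.toOpenPartialHomeomorph_coe] at this
  -- smoothness of Φ
  have hΦcd : ContDiffOn ℝ 1 Φ U := by
    refine ContDiffOn.add contDiffOn_id ?_
    exact ((contDiffOn_const.mul hu).sub
      ((contDiff_const.inner (𝕜 := ℝ) contDiff_id).contDiffOn)).smul contDiffOn_const
  have hfdc : ContinuousOn (fderiv ℝ Φ) U := hΦcd.continuousOn_fderiv_of_isOpen hUo le_rfl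
  have hdetc : ContinuousOn (fun x => (fderiv ℝ Φ x).det) U :=
    ContinuousLinearMap.continuous_det.comp_continuousOn hfdc
  have hfz : fderiv ℝ Φ z = ((ContinuousLinearEquiv.refl ℝ (EuclideanSpace ℝ (Fin N)) : (EuclideanSpace ℝ (Fin N)) ≃L[ℝ] (EuclideanSpace ℝ (Fin N))) : (EuclideanSpace ℝ (Fin N)) →L[ℝ] (EuclideanSpace ℝ (Fin N))) :=
    hΦsd.hasFDerivAt.fderiv
  have hdetz : (fderiv ℝ Φ z).det = 1 := by
    rw [hfz]
    simp [ContinuousLinearMap.det]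
  have hca : ContinuousAt (fun x => (fderiv ℝ Φ x).det) z :=
    hdetc.continuousAt (hUo.mem_nhds hzU)
  have hev : {x | (1:ℝ)/2 < (fderiv ℝ Φ x).det} ∈ nhds z := by
    have : Ioi ((1:ℝ)/2) ∈ nhds ((fderiv ℝ Φ z).det) := by
      rw [hdetz]; exact Ioi_mem_nhds (by norm_num)
    exact hca this
  have hmem : PH.source ∩ U ∩ {x | (1:ℝ)/2 < (fderiv ℝ Φ x).det} ∈ nhds z :=
    Filter.inter_mem (Filter.inter_mem (PH.open_source.mem_nhds hzsource)
      (hUo.mem_nhds hzU)) hev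
  obtain ⟨r0, hr0pos, hr0⟩ := Metric.mem_nhds_iff.1 hmem
  set r := r0/2 with hrdef
  have hrpos : 0 < r := by positivity
  have hcbsub : closedBall z r ⊆ ball z r0 := closedBall_subset_ball (by rw [hrdef]; linarith)
  have hcbU : closedBall z r ⊆ U := fun x hx => ((hr0 (hcbsub hx)).1).2
  have hcbsource : closedBall z r ⊆ PH.source := fun x hx => ((hr0 (hcbsub hx)).1).1
  have hcbdet : ∀ x ∈ closedBall z r, (1:ℝ)/2 < (fderiv ℝ Φ x).det :=
    fun x hx => (hr0 (hcbsub hx)).2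
  -- bounded image
  have hcomp : IsCompact (Φ '' closedBall z r) :=
    (isCompact_closedBall z r).image_of_continuousOn (hΦcd.continuousOn.mono hcbU)
  obtain ⟨R0, hR0⟩ := hcomp.isBounded.subset_ball (Φ z)
  set R := max R0 1 with hRdef
  have hRpos : (0:ℝ) < R := lt_of_lt_of_le one_pos (le_max_right _ _)
  have himgball : Φ '' closedBall z r ⊆ ball (Φ z) R :=
    hR0.trans (ball_subset_ball (le_max_left _ _))
  refine ⟨r, hrpos, 2 * (2 * ‖g‖⁻¹) * (2 * R)^(N-1), by positivity, ?_⟩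
  intro δ hδ
  set A : Set (EuclideanSpace ℝ (Fin N)) := closedBall z r ∩ u ⁻¹' (Icc (-δ) δ) with hAdef
  have hAmeas : MeasurableSet A := by
    have hclosed : IsClosed A :=
      ContinuousOn.preimage_isClosed_of_isClosed (hu.continuousOn.mono hcbU)
        Metric.isClosed_closedBall isClosed_Icc
    exact hclosed.measurableSet
  have hAsub : {x | x ∈ ball z r ∧ |u x| ≤ δ} ⊆ A := by
    rintro x ⟨hx1, hx2⟩
    exact ⟨ball_subset_closedBall hx1, abs_le.1 hx2⟩
  have hf' : ∀ x ∈ A, HasFDerivWithinAt Φ (fderiv ℝ Φ x) A x := by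
    intro x hx
    exact (((hΦcd.differentiableOn one_ne_zero).differentiableAt
      (hUo.mem_nhds (hcbU hx.1))).hasFDerivAt).hasFDerivWithinAt
  have hinjA : InjOn Φ A := hinj.mono (fun x hx => hcbsource hx.1)
  have hkey := lintegral_abs_det_fderiv_eq_addHaar_image volume hAmeas hf' hinjA
  -- lower bound for the integral
  have hlow : ENNReal.ofReal ((1:ℝ)/2) * volume A ≤ volume (Φ '' A) := by
    rw [← hkey, ← setLIntegral_const A (ENNReal.ofReal ((1:ℝ)/2))]
    refine lintegral_mono_ae ?_
    refine (ae_restrict_iff' hAmeas).2 (Filter.Eventually.of_forall ?_)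
    intro x hx
    refine ENNReal.ofReal_le_ofReal ?_
    exact le_trans (le_of_lt (hcbdet x hx.1)) (le_abs_self _)
  have h2 : volume A ≤ 2 * volume (Φ '' A) := by
    have hhalf : ENNReal.ofReal ((1:ℝ)/2) = 2⁻¹ := by
      rw [show (1:ℝ)/2 = (2:ℝ)⁻¹ by norm_num, ENNReal.ofReal_inv_of_pos two_pos,
        ENNReal.ofReal_ofNat]
    have := mul_le_mul_right hlow 2
    rwa [hhalf, ← mul_assoc, ENNReal.mul_inv_cancel (by norm_num) (by norm_num),
      one_mul] at this
  -- image inside slab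
  have himg : Φ '' A ⊆ {y | y ∈ ball (Φ z) R ∧ |(inner ℝ e y : ℝ) - 0| ≤ ‖g‖⁻¹ * δ} := by
    rintro y ⟨x, hx, rfl⟩
    refine ⟨himgball ⟨x, hx.1, rfl⟩, ?_⟩
    rw [hinnerΦ x, sub_zero, abs_mul, abs_of_nonneg (inv_nonneg.2 (norm_nonneg g))]
    have : |u x| ≤ δ := abs_le.2 hx.2
    exact mul_le_mul_of_nonneg_left this (inv_nonneg.2 (norm_nonneg g))
  have hslab := slab_vol e he (Φ z) R 0 (‖g‖⁻¹ * δ)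
  calc volume {x | x ∈ ball z r ∧ |u x| ≤ δ}
      ≤ volume A := measure_mono hAsub
    _ ≤ 2 * volume (Φ '' A) := h2
    _ ≤ 2 * (ENNReal.ofReal (2 * (‖g‖⁻¹ * δ)) * ENNReal.ofReal (2 * R) ^ (N - 1)) := by
        exact mul_le_mul_right (le_trans (measure_mono himg) hslab) 2
    _ = ENNReal.ofReal (2 * (2 * ‖g‖⁻¹) * (2 * R)^(N-1) * δ) := by
        rw [← ENNReal.ofReal_pow (by positivity), ← ENNReal.ofReal_mul (by positivity)]
        nth_rewrite 1 [← ENNReal.ofReal_ofNat 2]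
        rw [← ENNReal.ofReal_mul (by positivity)]
        congr 1
        ring

/-- If `u ∈ C¹(U)` with `closure Ω ⊆ U` and `∇u ≠ 0` at every zero of `u` in
`closure Ω`, then `λ({x ∈ Ω : |u(x)| ≤ δ}) ≤ κ δ` for some `κ > 0` and all `δ > 0`. -/
theorem statement8 {N : ℕ} (Ω U : Set (EuclideanSpace ℝ (Fin N)))
    (hΩo : IsOpen Ω) (hΩb : Bornology.IsBounded Ω)
    (hUo : IsOpen U) (hΩU : closure Ω ⊆ U)
    (u : EuclideanSpace ℝ (Fin N) → ℝ) (hu : ContDiffOn ℝ 1 u U)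
    (hnd : ∀ x ∈ closure Ω, u x = 0 → gradient u x ≠ 0) :
    ∃ κ : ℝ, 0 < κ ∧ ∀ δ : ℝ, 0 < δ →
      volume {x ∈ Ω | |u x| ≤ δ} ≤ ENNReal.ofReal (κ * δ) := by
  classical
  have hK : IsCompact (closure Ω) := hΩb.isCompact_closure
  set Z : Set (EuclideanSpace ℝ (Fin N)) := closure Ω ∩ u ⁻¹' {0} with hZdef
  have hZclosed : IsClosed Z :=
    ContinuousOn.preimage_isClosed_of_isClosed (hu.continuousOn.mono hΩU)
      isClosed_closure isClosed_singleton
  have hZc : IsCompact Z := hK.of_isClosed_subset hZclosed inter_subset_left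
  have hloc : ∀ z ∈ Z, ∃ r, 0 < r ∧ ∃ C, 0 ≤ C ∧ ∀ δ : ℝ, 0 < δ →
      volume {x | x ∈ ball z r ∧ |u x| ≤ δ} ≤ ENNReal.ofReal (C * δ) := by
    intro z hz
    obtain ⟨r, hr, C, hC, hb⟩ := local_bound hUo hu (hΩU hz.1) (hnd z hz.1 hz.2)
    exact ⟨r, hr, C, hC, hb⟩
  choose! r hrpos C hC0 hCb using hloc
  obtain ⟨t, htZ, htcov⟩ := hZc.elim_nhds_subcover (fun z => ball z (r z))
    (fun z hz => ball_mem_nhds z (hrpos z hz))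
  set V : Set (EuclideanSpace ℝ (Fin N)) := ⋃ x ∈ t, ball x (r x) with hVdef
  have hVopen : IsOpen V := isOpen_biUnion fun i _ => isOpen_ball
  have hKVc : IsCompact (closure Ω \ V) := hK.diff hVopen
  have hnz : ∀ x ∈ closure Ω \ V, u x ≠ 0 := by
    rintro x ⟨hx1, hx2⟩ h0
    exact hx2 (htcov ⟨hx1, h0⟩)
  have hε : ∃ ε, 0 < ε ∧ ∀ x ∈ closure Ω \ V, ε ≤ |u x| := by
    by_cases hne : (closure Ω \ V).Nonempty
    · obtain ⟨x₀, hx₀, hmin⟩ := hKVc.exists_isMinOn hne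
        ((hu.continuousOn.mono (fun x hx => hΩU hx.1)).abs)
      exact ⟨|u x₀|, abs_pos.2 (hnz x₀ hx₀), fun x hx => hmin hx⟩
    · exact ⟨1, one_pos, fun x hx => absurd ⟨x, hx⟩ hne⟩
  obtain ⟨ε, hεpos, hεlb⟩ := hε
  have hvolΩ : volume Ω < ⊤ := hΩb.measure_lt_top
  set C₀ : ℝ := ∑ x ∈ t, C x with hC₀def
  have hC₀0 : 0 ≤ C₀ := Finset.sum_nonneg fun x hx => hC0 x (htZ x hx)
  set M : ℝ := (volume Ω).toReal / ε with hMdef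
  have hM0 : 0 ≤ M := div_nonneg ENNReal.toReal_nonneg hεpos.le
  refine ⟨C₀ + M + 1, by linarith, ?_⟩
  intro δ hδ
  by_cases hcase : δ < ε
  · have hsub : {x ∈ Ω | |u x| ≤ δ} ⊆ ⋃ x ∈ t, {y | y ∈ ball x (r x) ∧ |u y| ≤ δ} := by
      rintro y ⟨hy1, hy2⟩
      have hyV : y ∈ V := by
        by_contra hyV
        exact absurd (le_trans (hεlb y ⟨subset_closure hy1, hyV⟩) hy2) (not_le.2 hcase)
      rw [hVdef, mem_iUnion₂] at hyV
      obtain ⟨x, hx, hyx⟩ := hyV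
      exact mem_iUnion₂.2 ⟨x, hx, hyx, hy2⟩
    calc volume {x ∈ Ω | |u x| ≤ δ}
        ≤ volume (⋃ x ∈ t, {y | y ∈ ball x (r x) ∧ |u y| ≤ δ}) := measure_mono hsub
      _ ≤ ∑ x ∈ t, volume {y | y ∈ ball x (r x) ∧ |u y| ≤ δ} := measure_biUnion_finset_le _ _
      _ ≤ ∑ x ∈ t, ENNReal.ofReal (C x * δ) :=
          Finset.sum_le_sum fun x hx => hCb x (htZ x hx) δ hδ
      _ = ENNReal.ofReal (∑ x ∈ t, C x * δ) :=
          (ENNReal.ofReal_sum_of_nonneg fun x hx =>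
            mul_nonneg (hC0 x (htZ x hx)) hδ.le).symm
      _ = ENNReal.ofReal (C₀ * δ) := by rw [← Finset.sum_mul]
      _ ≤ ENNReal.ofReal ((C₀ + M + 1) * δ) := by
          apply ENNReal.ofReal_le_ofReal
          nlinarith
  · push_neg at hcase
    calc volume {x ∈ Ω | |u x| ≤ δ}
        ≤ volume Ω := measure_mono (sep_subset _ _)
      _ = ENNReal.ofReal ((volume Ω).toReal) := (ENNReal.ofReal_toReal hvolΩ.ne).symm
      _ ≤ ENNReal.ofReal ((C₀ + M + 1) * δ) := by
          apply ENNReal.ofReal_le_ofReal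
          have h1 : (volume Ω).toReal = M * ε := by
            rw [hMdef]; field_simp
          nlinarith
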